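/- arXiv:gr-qc/9912013 — 3 statements merged into one kernel-verified Lean document; each statement's English description precedes it below -/
import Mathlib

section
/- For s > 0 and a constant c with c²s ≠ 1 and c√s ≠ −1, the functions u(s) = cs/(c²s − 1) and v(s) = −√s/(c√s + 1) satisfy the system: 2s^{3/2}v' + v² = 0; 2s^{3/2}u' + 2s^{3/2}v' + 2u² + 2uv + v² = 0; u√s + v√s + 2uv + v² = 0. -/
open Real

/-- `u(s) = cs/(c²s−1)` and `v(s) = −√s/(c√s+1)` solve the GR-type
(`ρ₁ = 0`) reduced system. -/
theorem schwarzschild_radial_functions_solve_GR_system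
    (c s : ℝ) (hs : 0 < s) (h1 : c ^ 2 * s ≠ 1) (h2 : c * Real.sqrt s ≠ -1) :
    let u : ℝ → ℝ := fun t => c * t / (c ^ 2 * t - 1)
    let v : ℝ → ℝ := fun t => -Real.sqrt t / (c * Real.sqrt t + 1)
    2 * (s * Real.sqrt s) * deriv v s + (v s) ^ 2 = 0
    ∧ 2 * (s * Real.sqrt s) * deriv u s + 2 * (s * Real.sqrt s) * deriv v s
        + 2 * (u s) ^ 2 + 2 * u s * v s + (v s) ^ 2 = 0
    ∧ u s * Real.sqrt s + v s * Real.sqrt s + 2 * u s * v s + (v s) ^ 2 = 0 := by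
  intro u v
  have d1 : c ^ 2 * s - 1 ≠ 0 := sub_ne_zero.mpr h1
  have d2 : c * Real.sqrt s + 1 ≠ 0 := fun h => h2 (by linarith)
  have hu : HasDerivAt u
      ((c * (c ^ 2 * s - 1) - c * s * c ^ 2) / (c ^ 2 * s - 1) ^ 2) s := by
    have hnum : HasDerivAt (fun t : ℝ => c * t) c s := by
      simpa using (hasDerivAt_id s).const_mul c
    have hden : HasDerivAt (fun t : ℝ => c ^ 2 * t - 1) (c ^ 2) s := by
      simpa using ((hasDerivAt_id s).const_mul (c ^ 2)).sub_const 1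
    exact hnum.div hden d1
  have hsq := Real.hasDerivAt_sqrt hs.ne'
  have hv : HasDerivAt v
      ((-(1 / (2 * Real.sqrt s)) * (c * Real.sqrt s + 1)
        - -Real.sqrt s * (c * (1 / (2 * Real.sqrt s))))
        / (c * Real.sqrt s + 1) ^ 2) s := by
    have hnum : HasDerivAt (fun t : ℝ => -Real.sqrt t) (-(1 / (2 * Real.sqrt s))) s :=
      hsq.neg
    have hden : HasDerivAt (fun t : ℝ => c * Real.sqrt t + 1)
        (c * (1 / (2 * Real.sqrt s))) s := (hsq.const_mul c).add_const 1
    exact hnum.div hden d2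
  rw [hu.deriv, hv.deriv]
  have hr0 : 0 < Real.sqrt s := Real.sqrt_pos.mpr hs
  have hr2 : Real.sqrt s ^ 2 = s := Real.sq_sqrt hs.le
  simp only [u, v]
  -- replace sqrt s by a fresh variable r with r ^ 2 = s
  generalize hrr : Real.sqrt s = r at *
  subst hr2
  have hr0' : r ≠ 0 := hr0.ne'
  have d1' : r ^ 2 * c ^ 2 - 1 ≠ 0 := by rw [mul_comm]; exact d1
  have d2' : r * c + 1 ≠ 0 := by rw [mul_comm]; exact d2
  refine ⟨?_, ?_, ?_⟩ <;> field_simp <;> ring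
end

section
/- Let a, b, ρ₁, ρ₃ be reals with ρ₁ ≠ 0, a ≠ 0, ρ₁ ≠ ρ₃, 3ρ₁ ≠ 2ρ₃, and ρ₁ + 2ρ₃ ≠ 0. Then the algebraic system (i) ρ₁(a + 2ab − 2b² + a²) + 2ρ₃(b + b²) = 0, (ii) ρ₁(2b + 4ab − a² + 2b²) + 2ρ₃(a + b + 2a² + 2ab + b²) = 0, (iii) ρ₁(2b + a² + 2b²) + 2ρ₃(a + b + 2ab + b²) = 0 has the unique solution a = 2ρ₁/(2ρ₃ − 3ρ₁), b = (ρ₁ − 2ρ₃)/(2ρ₃ − 3ρ₁). -/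
/-- in the generic case (`ρ₁ ≠ 0`, `a ≠ 0`, `ρ₁ ≠ ρ₃`, `3ρ₁ ≠ 2ρ₃`,
`ρ₁ + 2ρ₃ ≠ 0`) the algebraic system for the power-law ansatz holds iff
`a = 2ρ₁/(2ρ₃−3ρ₁)` and `b = (ρ₁−2ρ₃)/(2ρ₃−3ρ₁)`. -/
theorem proportional_solution_unique
    (a b ρ₁ ρ₃ : ℝ) (hρ₁ : ρ₁ ≠ 0) (ha : a ≠ 0) (h13 : ρ₁ ≠ ρ₃)
    (h32 : 3 * ρ₁ ≠ 2 * ρ₃) (h12 : ρ₁ + 2 * ρ₃ ≠ 0) :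
    (ρ₁ * (a + 2 * a * b - 2 * b ^ 2 + a ^ 2) + 2 * ρ₃ * (b + b ^ 2) = 0
      ∧ ρ₁ * (2 * b + 4 * a * b - a ^ 2 + 2 * b ^ 2)
          + 2 * ρ₃ * (a + b + 2 * a ^ 2 + 2 * a * b + b ^ 2) = 0
      ∧ ρ₁ * (2 * b + a ^ 2 + 2 * b ^ 2)
          + 2 * ρ₃ * (a + b + 2 * a * b + b ^ 2) = 0)
    ↔ (a = 2 * ρ₁ / (2 * ρ₃ - 3 * ρ₁) ∧ b = (ρ₁ - 2 * ρ₃) / (2 * ρ₃ - 3 * ρ₁)) := by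
  have hd : 2 * ρ₃ - 3 * ρ₁ ≠ 0 := by
    intro h; apply h32; linarith
  have h13' : ρ₁ - ρ₃ ≠ 0 := sub_ne_zero.mpr h13
  constructor
  · rintro ⟨h1, h2, h3⟩
    have h4 : (2 * a) * (ρ₁ * (2 * b - a) + 2 * ρ₃ * a) = 0 := by
      linear_combination h2 - h3
    have hE : ρ₁ * (2 * b - a) + 2 * ρ₃ * a = 0 := by
      rcases mul_eq_zero.mp h4 with h | h
      · exact absurd (by linarith : a = 0) ha
      · exact h
    have key : a * ((ρ₁ - ρ₃) * ((ρ₁ + 2 * ρ₃) *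
        ((3 * ρ₁ - 2 * ρ₃) * a + 2 * ρ₁))) = 0 := by
      linear_combination (2 * ρ₁ ^ 2) * h1 +
        (2 * ρ₁ * (ρ₁ - ρ₃) * b + a * (2 * ρ₃ ^ 2 - 3 * ρ₁ * ρ₃ - ρ₁ ^ 2)
          - 2 * ρ₁ * ρ₃) * hE
    have hlin : (3 * ρ₁ - 2 * ρ₃) * a + 2 * ρ₁ = 0 := by
      rcases mul_eq_zero.mp key with h | h
      · exact absurd h ha
      rcases mul_eq_zero.mp h with h | h
      · exact absurd h h13'
      rcases mul_eq_zero.mp h with h | h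
      · exact absurd (by linarith : ρ₁ + 2 * ρ₃ = 0) h12
      · exact h
    have haa : a = 2 * ρ₁ / (2 * ρ₃ - 3 * ρ₁) := by
      rw [eq_div_iff hd]
      linear_combination -hlin
    refine ⟨haa, ?_⟩
    have hb2 : 2 * ρ₁ * b = a * (ρ₁ - 2 * ρ₃) := by linear_combination hE
    rw [haa] at hb2
    field_simp at hb2
    rw [eq_div_iff hd]
    apply mul_left_cancel₀ (mul_ne_zero two_ne_zero hρ₁)
    linear_combination (2 * ρ₃ - 3 * ρ₁) * hE - (ρ₁ - 2 * ρ₃) * hlin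
  · rintro ⟨haa, hbb⟩
    subst haa hbb
    refine ⟨?_, ?_, ?_⟩ <;> (field_simp; ring)
end

section
/- Let ρ₁, ρ₃ satisfy 3ρ₁ = 2ρ₃ with ρ₁ ≠ 0. Then the system ρ₁(a + 2ab − 2b² + a²) + 2ρ₃(b + b²) = 0, a(ρ₁(2b − a) + 2ρ₃a) = 0, (a+b)(ρ₁(2b − a) + 2ρ₃a) = 0 admits no real solution with a ≠ 0. -/
/-- if `3ρ₁ = 2ρ₃` and `ρ₁ ≠ 0`, the algebraic system for the power-law
ansatz has no real solution with `a ≠ 0`. -/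
theorem no_proportional_solution_when_three_rho1_eq_two_rho3
    (ρ₁ ρ₃ : ℝ) (h : 3 * ρ₁ = 2 * ρ₃) (hρ₁ : ρ₁ ≠ 0) :
    ¬ ∃ a b : ℝ, a ≠ 0
      ∧ ρ₁ * (a + 2 * a * b - 2 * b ^ 2 + a ^ 2) + 2 * ρ₃ * (b + b ^ 2) = 0
      ∧ a * (ρ₁ * (2 * b - a) + 2 * ρ₃ * a) = 0
      ∧ (a + b) * (ρ₁ * (2 * b - a) + 2 * ρ₃ * a) = 0 := by
  rintro ⟨a, b, ha, h1, h2, _⟩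
  have h2' : ρ₁ * (2 * b - a) + 2 * ρ₃ * a = 0 := by
    rcases mul_eq_zero.mp h2 with h' | h'
    · exact absurd h' ha
    · exact h'
  have hb : ρ₁ * (2 * b + 2 * a) = 0 := by linear_combination h2' + a * h
  have hba : b = -a := by
    have := mul_eq_zero.mp hb
    rcases this with h' | h'
    · exact absurd h' hρ₁
    · linarith
  subst hba
  have : ρ₁ * (-2 * a) = 0 := by linear_combination h1 + (a ^ 2 - a) * h
  rcases mul_eq_zero.mp this with h' | h'
  · exact hρ₁ h'
  · exact ha (by linarith)
end
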